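/- Let g : ℝ≥0 × ℝ^d → ℝ^d and h : ℝ≥0 → ℝ^d be continuous. Suppose |g(t,x) − h(t)| ≤ η for all t ∈ [0,1] and all x with |x| ≤ M, that |∫₀^t h(s)ds| ≤ C for all t ∈ [0,1], and that |x₀| + C + η + 1 ≤ M. Then any solution x of x' = g(t,x), x(0) = x₀ on [0,1] satisfies |x(t)| ≤ M and |x(t) − x₀ − ∫₀^t h(s)ds| ≤ η for all t ∈ [0,1]. -/

import Mathlib

open Filter Set intervalIntegral Topology

theorem stmt_4 (d : ℕ) (hd : 0 < d) (x₀ : Fin d → ℝ)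
    (g : ℝ → (Fin d → ℝ) → (Fin d → ℝ)) (h : ℝ → (Fin d → ℝ))
    (hg : Continuous fun p : ℝ × (Fin d → ℝ) => g p.1 p.2)
    (hh : Continuous h)
    (η C M : ℝ) (hη : 0 < η) (hC : 0 < C) (hM : 0 < M)
    (hgh : ∀ t ∈ Icc (0:ℝ) 1, ∀ x : Fin d → ℝ, ‖x‖ ≤ M → ‖g t x - h t‖ ≤ η)
    (hint : ∀ t ∈ Icc (0:ℝ) 1, ‖∫ s in (0:ℝ)..t, h s‖ ≤ C)
    (hsize : ‖x₀‖ + C + η + 1 ≤ M)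
    (x : ℝ → (Fin d → ℝ)) (hx0 : x 0 = x₀)
    (hxsol : ∀ t ∈ Icc (0:ℝ) 1, HasDerivWithinAt x (g t (x t)) (Icc 0 1) t) :
    ∀ t ∈ Icc (0:ℝ) 1, ‖x t‖ ≤ M ∧ ‖x t - x₀ - ∫ s in (0:ℝ)..t, h s‖ ≤ η := by
  have hxc : ContinuousOn x (Icc 0 1) := fun t ht => (hxsol t ht).continuousWithinAt
  have hgc : ContinuousOn (fun s => g s (x s)) (Icc 0 1) :=
    hg.comp_continuousOn (continuousOn_id.prodMk hxc)
  -- key estimate under the assumption that x stays in the ball up to time t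
  have key : ∀ t ∈ Icc (0:ℝ) 1, (∀ s ∈ Icc (0:ℝ) t, ‖x s‖ ≤ M) →
      ‖x t - x₀ - ∫ s in (0:ℝ)..t, h s‖ ≤ η ∧ ‖x t‖ ≤ M - 1 := by
    intro t ht hb
    have ht0 : (0:ℝ) ≤ t := ht.1
    have hsub : Icc (0:ℝ) t ⊆ Icc 0 1 := Icc_subset_Icc le_rfl ht.2
    have hgint : IntervalIntegrable (fun s => g s (x s)) MeasureTheory.volume 0 t := by
      apply ContinuousOn.intervalIntegrable
      rw [uIcc_of_le ht0]
      exact hgc.mono hsub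
    have hhint : IntervalIntegrable h MeasureTheory.volume 0 t :=
      hh.intervalIntegrable 0 t
    have hftc : ∫ s in (0:ℝ)..t, g s (x s) = x t - x 0 := by
      apply integral_eq_sub_of_hasDeriv_right_of_le ht0 (hxc.mono hsub) ?_ hgint
      intro s hs
      have hs1 : s ∈ Ioo (0:ℝ) 1 := ⟨hs.1, lt_of_lt_of_le hs.2 ht.2⟩
      have : HasDerivAt x (g s (x s)) s :=
        (hxsol s (Ioo_subset_Icc_self hs1)).hasDerivAt (Icc_mem_nhds hs1.1 hs1.2)
      exact this.hasDerivWithinAt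
    have heq : x t - x₀ - ∫ s in (0:ℝ)..t, h s
        = ∫ s in (0:ℝ)..t, (g s (x s) - h s) := by
      rw [intervalIntegral.integral_sub hgint hhint, hftc, hx0]
    have hbound : ‖x t - x₀ - ∫ s in (0:ℝ)..t, h s‖ ≤ η * |t - 0| := by
      rw [heq]
      apply intervalIntegral.norm_integral_le_of_norm_le_const
      intro s hs
      rw [uIoc_of_le ht0] at hs
      have hsIcc : s ∈ Icc (0:ℝ) t := ⟨le_of_lt hs.1, hs.2⟩
      exact hgh s (hsub hsIcc) (x s) (hb s hsIcc)
    have hηt : η * |t - 0| ≤ η := by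
      rw [abs_of_nonneg (by linarith : (0:ℝ) ≤ t - 0)]
      nlinarith [ht.2]
    constructor
    · exact hbound.trans hηt
    · have h1 : ‖x t‖ ≤ ‖x t - x₀ - ∫ s in (0:ℝ)..t, h s‖ + ‖x₀‖
          + ‖∫ s in (0:ℝ)..t, h s‖ := by
        have e : x t = (x t - x₀ - ∫ s in (0:ℝ)..t, h s) + x₀
            + ∫ s in (0:ℝ)..t, h s := by abel
        conv_lhs => rw [e]
        exact norm_add₃_le
      have h2 := hint t ht
      linarith [hbound.trans hηt]
  -- global bound via infimum of bad times
  have hM1 : ‖x₀‖ ≤ M - 1 := by linarith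
  have bound : ∀ t ∈ Icc (0:ℝ) 1, ‖x t‖ ≤ M := by
    by_contra hcon
    push_neg at hcon
    obtain ⟨t₀, ht₀, ht₀M⟩ := hcon
    set B := {t ∈ Icc (0:ℝ) 1 | M ≤ ‖x t‖} with hB
    have hBc : IsClosed B := by
      have hnc : ContinuousOn (fun t => ‖x t‖) (Icc 0 1) := hxc.norm
      have : B = Icc (0:ℝ) 1 ∩ (fun t => ‖x t‖) ⁻¹' (Ici M) := by
        ext s; exact Iff.rfl
      rw [this]
      exact hnc.preimage_isClosed_of_isClosed isClosed_Icc isClosed_Ici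
    have hBne : B.Nonempty := ⟨t₀, ht₀, le_of_lt ht₀M⟩
    have hBbdd : BddBelow B := ⟨0, fun s hs => hs.1.1⟩
    set τ := sInf B with hτ
    have hτB : τ ∈ B := hBc.csInf_mem hBne hBbdd
    have hτIcc : τ ∈ Icc (0:ℝ) 1 := hτB.1
    have hτM : M ≤ ‖x τ‖ := hτB.2
    have hlt : ∀ s ∈ Icc (0:ℝ) 1, s < τ → ‖x s‖ ≤ M := by
      intro s hs hsτ
      by_contra hc
      push_neg at hc
      exact absurd (csInf_le hBbdd ⟨hs, le_of_lt hc⟩) (not_le.2 hsτ)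
    have hall : ∀ s ∈ Icc (0:ℝ) τ, ‖x s‖ ≤ M := by
      intro s hs
      rcases lt_or_eq_of_le hs.2 with hlt' | heq'
      · exact hlt s ⟨hs.1, le_trans (le_of_lt hlt') hτIcc.2⟩ hlt'
      · rw [heq']
        rcases eq_or_lt_of_le hτIcc.1 with h0 | h0
        · rw [← h0, hx0]; linarith
        · have hne : (𝓝[Ico (0:ℝ) τ] τ).NeBot := by
            apply mem_closure_iff_nhdsWithin_neBot.1
            rw [closure_Ico (ne_of_lt h0)]
            exact ⟨hτIcc.1, le_refl τ⟩
          have htend : Tendsto (fun u => ‖x u‖) (𝓝[Ico (0:ℝ) τ] τ) (𝓝 ‖x τ‖) := by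
            apply ((hxc.norm τ hτIcc).mono ?_).tendsto
            intro u hu
            exact ⟨hu.1, le_trans (le_of_lt hu.2) hτIcc.2⟩
          apply le_of_tendsto htend
          filter_upwards [self_mem_nhdsWithin] with u hu
          exact hlt u ⟨hu.1, le_trans (le_of_lt hu.2) hτIcc.2⟩ hu.2
    have := (key τ hτIcc hall).2
    linarith
  intro t ht
  have hall : ∀ s ∈ Icc (0:ℝ) t, ‖x s‖ ≤ M := fun s hs =>
    bound s ⟨hs.1, le_trans hs.2 ht.2⟩
  exact ⟨bound t ht, (key t ht hall).1⟩
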